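/- Let ι be a finite nonempty type and let p, q be probability distributions on ι. Suppose i ∈ ι is a strict maximizer of p, with top-2 margin m = p(i) − max_{j ≠ i} p(j) > 0. If there exists j ≠ i with q(j) ≥ q(i) (in particular, if the argmax of q differs from i), then TV(p, q) ≥ m/2. -/
import Mathlib


/-- A probability distribution on a finite type: nonnegative and sums to 1. -/
def IsProbDist {ι : Type*} [Fintype ι] (p : ι → ℝ) : Prop :=
  (∀ i, 0 ≤ p i) ∧ ∑ i, p i = 1

/-- Total variation distance between two functions on a finite type. -/
noncomputable def TV {ι : Type*} [Fintype ι] (p q : ι → ℝ) : ℝ :=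
  (1 / 2) * ∑ i, |p i - q i|

/-- Kullback–Leibler divergence on a finite type (terms with `p i = 0` contribute `0`,
since `Real.log 0 = 0`). -/
noncomputable def KL {ι : Type*} [Fintype ι] (p q : ι → ℝ) : ℝ :=
  ∑ i, p i * Real.log (p i / q i)

/-- Argmax change forces TV at least half the top-2 margin.
If `i` is a strict maximizer of `p` with top-2 margin `m = p i − max_{j ≠ i} p j`,
and some `j ≠ i` has `q j ≥ q i`, then `TV p q ≥ m / 2`. -/
theorem argmax_change_TV_lower_bound
    {ι : Type*} [Fintype ι] [Nonempty ι] [DecidableEq ι]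
    (p q : ι → ℝ) (hp : IsProbDist p) (hq : IsProbDist q) (i : ι)
    (hne : (Finset.univ.erase i).Nonempty)
    (hmax : ∀ j ≠ i, p j < p i)
    (hflip : ∃ j ≠ i, q i ≤ q j) :
    (p i - (Finset.univ.erase i).sup' hne p) / 2 ≤ TV p q := by

  obtain ⟨j, hj, hqij⟩ := hflip
  have hsup : p j ≤ (Finset.univ.erase i).sup' hne p :=
    Finset.le_sup' p (Finset.mem_erase.mpr ⟨hj, Finset.mem_univ j⟩)
  have key : p i - (Finset.univ.erase i).sup' hne p ≤ |p i - q i| + |p j - q j| := by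
    have h1 : p i - p j ≤ (p i - q i) + (q j - p j) := by linarith
    calc p i - (Finset.univ.erase i).sup' hne p ≤ p i - p j := by linarith
      _ ≤ (p i - q i) + (q j - p j) := h1
      _ ≤ |p i - q i| + |p j - q j| := by
          have := le_abs_self (p i - q i)
          have := neg_le_abs (p j - q j)
          linarith [abs_neg (p j - q j)]
  have hsum : |p i - q i| + |p j - q j| ≤ ∑ k, |p k - q k| := by
    have := Finset.sum_le_sum_of_subset_of_nonneg
      (Finset.subset_univ ({i, j} : Finset ι))
      (fun k _ _ => abs_nonneg (p k - q k))
    rwa [Finset.sum_pair (fun h => hj h.symm)] at this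
  rw [TV]
  linarith
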